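/- Let n be a natural number, J a finite index set, and for each j ∈ J let R_j ⊆ (Fin r_j → Bool) be a mergeable Boolean relation and f_j : Fin r_j → Fin n a map of positions. Then the relation R := {t : Fin n → Bool | ∀ j ∈ J, t ∘ f_j ∈ R_j} is mergeable (where mergeability of a set of tuples Fin n → Bool is defined exactly as for relations of arity n). In particular, any relation implementable as a conjunction of constraints over mergeable relations is mergeable. -/
import Mathlib


/-- The merge operation applies to tuples `α β γ δ` if `α ∧ δ ≤ β ≤ α` and
`β ∧ γ ≤ δ ≤ γ` (pointwise, on Boolean tuples). -/
def MergeApplies {r : ℕ} (α β γ δ : Fin r → Bool) : Prop :=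
  (∀ i, (α i && δ i) ≤ β i) ∧ (∀ i, β i ≤ α i) ∧
    (∀ i, (β i && γ i) ≤ δ i) ∧ (∀ i, δ i ≤ γ i)

/-- A Boolean relation is mergeable if it is closed under the merge operation. -/
def Mergeable {r : ℕ} (R : Set (Fin r → Bool)) : Prop :=
  ∀ α ∈ R, ∀ β ∈ R, ∀ γ ∈ R, ∀ δ ∈ R,
    MergeApplies α β γ δ → (fun i => α i && (β i || γ i)) ∈ R

theorem stmt_2 {n : ℕ} {J : Type*} (Js : Finset J) (r : J → ℕ)
    (Rj : ∀ j : J, Set (Fin (r j) → Bool)) (f : ∀ j : J, Fin (r j) → Fin n)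
    (hmerge : ∀ j ∈ Js, Mergeable (Rj j)) :
    Mergeable {t : Fin n → Bool | ∀ j ∈ Js, (t ∘ f j) ∈ Rj j} := by
  intro α hα β hβ γ hγ δ hδ h
  intro j hj
  have := hmerge j hj (α ∘ f j) (hα j hj) (β ∘ f j) (hβ j hj) (γ ∘ f j) (hγ j hj)
    (δ ∘ f j) (hδ j hj)
    ⟨fun i => h.1 (f j i), fun i => h.2.1 (f j i), fun i => h.2.2.1 (f j i),
      fun i => h.2.2.2 (f j i)⟩
  exact this
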